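/- Let k, s₁, s₂ ∈ ℕ and let f be a singular quasi-Jacobi form of index zero, weight k and depth at most (s₁,s₂), with singular coefficient functions f_{j₁,j₂} (0 ≤ j₁ ≤ s₁, 0 ≤ j₂ ≤ s₂) satisfying f|_k A = Σ_{j₁,j₂} f_{j₁,j₂}·X(A)^{j₁}·Y(A)^{j₂} for all A ∈ SL(2,ℤ)⋉ℤ². Then the top coefficient satisfies f_{s₁,s₂}|_{k−2s₁−s₂} B = f_{s₁,s₂} for every B ∈ SL(2,ℤ)⋉ℤ²; in particular, f_{s₁,s₂} is a singular Jacobi form of index zero and weight k−2s₁−s₂. -/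

import Mathlib

open Complex Filter Finset Real

noncomputable section

/-- The lattice point `m + n·τ` associated with `p = (m, n) ∈ ℤ × ℤ`. -/
def latP (τ : ℂ) (p : ℤ × ℤ) : ℂ := (p.1 : ℂ) + (p.2 : ℂ) * τ

/-- The lattice `ℤ + τℤ` in `ℂ`. -/
def lat (τ : ℂ) : Set ℂ := {w : ℂ | ∃ p : ℤ × ℤ, w = latP τ p}

/-- The Weierstrass ℘-function of the lattice `ℤ + τℤ`. -/
def wp (τ z : ℂ) : ℂ :=
  1 / z ^ 2 + ∑' p : ℤ × ℤ, if p ≠ 0 then 1 / (z - latP τ p) ^ 2 - 1 / latP τ p ^ 2 else 0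

/-- The partial derivative `∂_z ℘`. -/
def wpz (τ z : ℂ) : ℂ := deriv (wp τ) z

/-- The Eisenstein series `e_k(τ) = Σ_{w ∈ Λ_τ ∖ {0}} w^{-k}`. -/
def eis (k : ℕ) (τ : ℂ) : ℂ := ∑' p : ℤ × ℤ, if p ≠ 0 then 1 / latP τ p ^ k else 0

def e4 : ℂ → ℂ := eis 4
def e6 : ℂ → ℂ := eis 6

/-- The weight 2 Eisenstein series `e₂`. -/
def e2 (τ : ℂ) : ℂ :=
  (π : ℂ) ^ 2 / 3 *
    (1 - 24 * ∑' n : ℕ, (∑ d ∈ (n + 1).divisors, (d : ℂ)) * Complex.exp (2 * π * I * (n + 1) * τ))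

/-- Inner (Eichler) sum in the definition of `E₁`. -/
def E1inner (τ z : ℂ) (m : ℤ) : ℂ :=
  limUnder atTop fun N : ℕ =>
    ∑ n ∈ Finset.Icc (-(N : ℤ)) (N : ℤ),
      if (m, n) ≠ ((0 : ℤ), (0 : ℤ)) then 1 / (z + m + n * τ) else 0

/-- The first shifted Eisenstein function `E₁` (Eichler summation). -/
def E1 (τ z : ℂ) : ℂ :=
  limUnder atTop fun M : ℕ => ∑ m ∈ Finset.Icc (-(M : ℤ)) (M : ℤ), E1inner τ z m

/-- The Jacobi group `SL(2,ℤ) ⋉ ℤ²`. -/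
abbrev JacobiGroup : Type := Matrix.SpecialLinearGroup (Fin 2) ℤ × ℤ × ℤ

def ja (A : JacobiGroup) : ℂ := ((A.1 0 0 : ℤ) : ℂ)
def jb (A : JacobiGroup) : ℂ := ((A.1 0 1 : ℤ) : ℂ)
def jc (A : JacobiGroup) : ℂ := ((A.1 1 0 : ℤ) : ℂ)
def jd (A : JacobiGroup) : ℂ := ((A.1 1 1 : ℤ) : ℂ)
def jlam (A : JacobiGroup) : ℂ := (A.2.1 : ℂ)
def jmu (A : JacobiGroup) : ℂ := (A.2.2 : ℂ)

/-- Multiplication `(g,Λ)(g',Λ') = (gg', Λg' + Λ')` of the Jacobi group. -/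
def jmul (A B : JacobiGroup) : JacobiGroup :=
  (A.1 * B.1,
    (A.2.1 * B.1 0 0 + A.2.2 * B.1 1 0 + B.2.1,
     A.2.1 * B.1 0 1 + A.2.2 * B.1 1 1 + B.2.2))

/-- The weight `k`, index-zero action of the Jacobi group on functions `ℂ → ℂ → ℂ`. -/
def jslash (k : ℤ) (f : ℂ → ℂ → ℂ) (A : JacobiGroup) : ℂ → ℂ → ℂ := fun τ z =>
  (jc A * τ + jd A) ^ (-k) *
    f ((ja A * τ + jb A) / (jc A * τ + jd A))
      ((z + jlam A * τ + jmu A) / (jc A * τ + jd A))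

def Jfun (A : JacobiGroup) : ℂ → ℂ → ℂ := fun τ _ => jc A * τ + jd A

def Xfun (A : JacobiGroup) : ℂ → ℂ → ℂ := fun τ _ => jc A / (jc A * τ + jd A)

def Yfun (A : JacobiGroup) : ℂ → ℂ → ℂ := fun τ z =>
  (jc A * z + jc A * jmu A - jd A * jlam A) / (jc A * τ + jd A)

/-- A singular function on `ℋ × ℂ`. -/
def IsSingular (f : ℂ → ℂ → ℂ) : Prop :=
  ∃ p : ℕ,
    (∀ τ : ℂ, 0 < τ.im →
      (∀ z : ℂ, f τ (z + 1) = f τ z) ∧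
      DifferentiableOn ℂ (f τ) (lat τ)ᶜ ∧
      ∀ w ∈ lat τ,
        (p = 0 → AnalyticAt ℂ (f τ) w) ∧
        (0 < p → ∃ h : MeromorphicAt (f τ) w, meromorphicOrderAt (f τ) w = (-(p : ℤ) : WithTop ℤ))) ∧
    (∀ τ : ℂ, 0 < τ.im → ∀ z : ℂ, f (τ + 1) z = f τ z) ∧
    ∃ (L : ℕ → ℂ → ℂ) (cf : ℕ → ℕ → ℂ),
      (∀ τ : ℂ, 0 < τ.im → ∃ ε > 0, ∀ z : ℂ, z ≠ 0 → ‖z‖ < ε →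
        f τ z = ∑' n : ℕ, L n τ * z ^ ((n : ℤ) - (p : ℤ))) ∧
      (∀ n, DifferentiableOn ℂ (L n) {τ : ℂ | 0 < τ.im}) ∧
      (∀ n, ∀ τ : ℂ, 0 < τ.im → L n τ = ∑' r : ℕ, cf n r * Complex.exp (2 * π * I * (r : ℂ) * τ))

/-- A singular Jacobi form of index zero and weight `k`. -/
def IsSingularJacobiForm (k : ℤ) (f : ℂ → ℂ → ℂ) : Prop :=
  IsSingular f ∧
    ∀ A : JacobiGroup, ∀ τ z : ℂ, 0 < τ.im → z ∉ lat τ → jslash k f A τ z = f τ z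

/-- The modular derivation `∂_τ = (π/(2i)) ∂/∂τ`. -/
def dtau (f : ℂ → ℂ → ℂ) : ℂ → ℂ → ℂ := fun τ z =>
  (π : ℂ) / (2 * I) * deriv (fun t => f t z) τ

/-- The elliptic derivation `∂_z`. -/
def dz (f : ℂ → ℂ → ℂ) : ℂ → ℂ → ℂ := fun τ z => deriv (f τ) z

/-- The Oberdieck derivation on forms of weight `k`. -/
def Obstar (k : ℤ) (f : ℂ → ℂ → ℂ) : ℂ → ℂ → ℂ := fun τ z =>
  4 * dtau f τ z + E1 τ z * dz f τ z - (k : ℂ) * e2 τ * f τ z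

section AuxLemmas
open Polynomial

lemma univar (s : ℕ) (c d : ℕ → ℂ) (a b : ℂ) (ha : a ≠ 0) (t : ℤ → ℂ)
    (ht : Function.Injective t)
    (h : ∀ m : ℤ, ∑ j ∈ range (s+1), c j * (a * t m + b) ^ j
        = ∑ j ∈ range (s+1), d j * t m ^ j) :
    d s = c s * a ^ s := by
  set p : ℂ[X] := ∑ j ∈ range (s+1), C (c j) * (C a * X + C b) ^ j with hp
  set q : ℂ[X] := ∑ j ∈ range (s+1), C (d j) * X ^ j with hq
  have heval : ∀ m : ℤ, (p - q).eval (t m) = 0 := by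
    intro m
    simp only [hp, hq, eval_sub, eval_finset_sum, eval_mul, eval_pow, eval_add, eval_C, eval_X]
    rw [sub_eq_zero]
    exact h m
  have hpq : p = q := by
    rw [← sub_eq_zero]
    apply Polynomial.eq_zero_of_infinite_isRoot
    apply Set.Infinite.mono (s := Set.range t)
    · rintro x ⟨m, rfl⟩; exact heval m
    · exact Set.infinite_range_of_injective ht
  have hlin : (C a * X + C b).natDegree = 1 := natDegree_linear ha
  have hlc : (C a * X + C b).leadingCoeff = a := leadingCoeff_linear ha
  have hcp : p.coeff s = c s * a ^ s := by
    rw [hp, finset_sum_coeff]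
    rw [Finset.sum_eq_single s]
    · rw [coeff_C_mul]
      have : ((C a * X + C b) ^ s).natDegree = s := by
        rw [natDegree_pow, hlin, mul_one]
      have h2 : ((C a * X + C b) ^ s).coeff s = a ^ s := by
        calc ((C a * X + C b) ^ s).coeff s
            = ((C a * X + C b) ^ s).coeff (((C a * X + C b) ^ s).natDegree) := by rw [this]
          _ = ((C a * X + C b) ^ s).leadingCoeff := coeff_natDegree
          _ = a ^ s := by rw [leadingCoeff_pow, hlc]
      rw [h2]
    · intro j hj hjs
      rw [coeff_C_mul]
      simp only [Finset.mem_range] at hj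
      have : ((C a * X + C b) ^ j).natDegree < s := by
        rw [natDegree_pow, hlin, mul_one]
        omega
      rw [coeff_eq_zero_of_natDegree_lt this, mul_zero]
    · intro hs; simp at hs
  have hcq : q.coeff s = d s := by
    rw [hq, finset_sum_coeff]
    rw [Finset.sum_eq_single s]
    · simp [coeff_C_mul, coeff_X_pow]
    · intro j hj hjs; simp only [coeff_C_mul, coeff_X_pow]
      rw [if_neg (by omega), mul_zero]
    · intro hs; simp at hs
  rw [← hcp, ← hcq, hpq]

lemma bivar (s₁ s₂ : ℕ) (c d : ℕ → ℕ → ℂ) (a₁ a₂ b₁ b₂ : ℂ) (ha₁ : a₁ ≠ 0) (ha₂ : a₂ ≠ 0)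
    (u : ℤ → ℂ) (hu : Function.Injective u) (v : ℤ → ℤ → ℂ) (hv : ∀ n, Function.Injective (v n))
    (h : ∀ n l : ℤ,
      ∑ j₁ ∈ range (s₁+1), ∑ j₂ ∈ range (s₂+1),
          c j₁ j₂ * (a₁ * u n + b₁) ^ j₁ * (a₂ * v n l + b₂) ^ j₂
        = ∑ j₁ ∈ range (s₁+1), ∑ j₂ ∈ range (s₂+1), d j₁ j₂ * u n ^ j₁ * v n l ^ j₂) :
    d s₁ s₂ = c s₁ s₂ * a₁ ^ s₁ * a₂ ^ s₂ := by
  have step1 : ∀ n : ℤ,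
      ∑ j₁ ∈ range (s₁+1), d j₁ s₂ * u n ^ j₁
        = (∑ j₁ ∈ range (s₁+1), c j₁ s₂ * (a₁ * u n + b₁) ^ j₁) * a₂ ^ s₂ := by
    intro n
    have := univar s₂ (fun j₂ => ∑ j₁ ∈ range (s₁+1), c j₁ j₂ * (a₁ * u n + b₁) ^ j₁)
      (fun j₂ => ∑ j₁ ∈ range (s₁+1), d j₁ j₂ * u n ^ j₁) a₂ b₂ ha₂ (v n) (hv n) ?_
    · simpa using this
    · intro m
      simp only [Finset.sum_mul]
      conv_lhs => rw [Finset.sum_comm]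
      conv_rhs => rw [Finset.sum_comm]
      exact h n m
  have := univar s₁ (fun j₁ => c j₁ s₂ * a₂ ^ s₂) (fun j₁ => d j₁ s₂) a₁ b₁ ha₁ u hu ?_
  · rw [this]; ring
  · intro m
    rw [step1 m, Finset.sum_mul]
    exact (Finset.sum_congr rfl fun j₁ _ => by ring).symm


lemma denom_ne_zero (a b c d : ℤ) (hdet : a * d - b * c = 1) (τ : ℂ) (hτ : 0 < τ.im) :
    (c : ℂ) * τ + (d : ℂ) ≠ 0 := by
  intro h
  have him : (c : ℝ) * τ.im = 0 := by
    have := congrArg Complex.im h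
    simpa using this
  have hc : c = 0 := by
    rcases mul_eq_zero.mp him with h' | h'
    · exact_mod_cast h'
    · exact absurd h' (ne_of_gt hτ)
  rw [hc] at h
  simp only [Int.cast_zero, zero_mul, zero_add] at h
  have hd : d = 0 := by exact_mod_cast h
  rw [hc, hd] at hdet
  omega

lemma im_transform (a b c d : ℤ) (hdet : a * d - b * c = 1) (τ : ℂ) (hτ : 0 < τ.im) :
    0 < (((a : ℂ) * τ + b) / ((c : ℂ) * τ + d)).im := by
  have hJ := denom_ne_zero a b c d hdet τ hτ
  have hN : 0 < Complex.normSq ((c : ℂ) * τ + d) := normSq_pos.mpr hJ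
  have key : (((a : ℂ) * τ + b) / ((c : ℂ) * τ + d)).im
      = τ.im / Complex.normSq ((c : ℂ) * τ + d) := by
    rw [Complex.div_im]
    have hdet' : (a : ℝ) * d - (b : ℝ) * c = 1 := by exact_mod_cast hdet
    simp only [Complex.add_im, Complex.add_re, Complex.mul_im, Complex.mul_re,
      Complex.intCast_re, Complex.intCast_im]
    field_simp
    linear_combination τ.im * hdet'
  rw [key]
  positivity


lemma aux_D (a b c d τ T n : ℂ) (hT : T * (c * τ + d) = a * τ + b) :
    (n * a + c) * τ + (n * b + d) = (n * T + 1) * (c * τ + d) := by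
  linear_combination -n * hT

lemma aux_X (a b c d τ T n : ℂ) (hdet : a * d - b * c = 1) (hJ : c * τ + d ≠ 0)
    (hT : T * (c * τ + d) = a * τ + b) (hden : n * T + 1 ≠ 0) :
    (n * a + c) / ((n * T + 1) * (c * τ + d))
      = 1 / (c * τ + d) ^ 2 * (n / (n * T + 1)) + c / (c * τ + d) := by
  have key : (n * a + c) * (c * τ + d) = n + c * (c * τ + d) * (n * T + 1) := by
    linear_combination n * hdet - n * c * hT
  rw [div_mul_div_comm, one_mul,
    div_add_div _ _ (mul_ne_zero (pow_ne_zero 2 hJ) hden) hJ,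
    div_eq_div_iff (mul_ne_zero hden hJ) (mul_ne_zero (mul_ne_zero (pow_ne_zero 2 hJ) hden) hJ)]
  linear_combination ((n * T + 1) * (c * τ + d) ^ 2) * key

lemma aux_Y (a b c d lam mu τ z T Z n l : ℂ) (hdet : a * d - b * c = 1) (hJ : c * τ + d ≠ 0)
    (hT : T * (c * τ + d) = a * τ + b) (hZ : Z * (c * τ + d) = z + lam * τ + mu)
    (hden : n * T + 1 ≠ 0) :
    ((n * a + c) * z + (n * a + c) * (l * b + mu) - (n * b + d) * (l * a + lam))
        / ((n * T + 1) * (c * τ + d))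
      = 1 / (c * τ + d) * ((n * Z - l) / (n * T + 1))
        + (c * z + c * mu - d * lam) / (c * τ + d) := by
  have keyY : ((n * a + c) * z + (n * a + c) * (l * b + mu) - (n * b + d) * (l * a + lam))
        * (c * τ + d)
      = n * (z + lam * τ + mu) - l * (c * τ + d)
        + (n * T + 1) * (c * z + c * mu - d * lam) * (c * τ + d) := by
    linear_combination (n * (z + lam * τ + mu) - l * (c * τ + d)) * hdet
      - n * (c * z + c * mu - d * lam) * hT
  rw [div_mul_div_comm, one_mul,
    div_add_div _ _ (mul_ne_zero hJ hden) hJ,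
    div_eq_div_iff (mul_ne_zero hden hJ) (mul_ne_zero (mul_ne_zero hJ hden) hJ)]
  linear_combination ((n * T + 1) * (c * τ + d)) * keyY
    - ((n * T + 1) * (c * τ + d) * n) * hZ

lemma aux_arg1 (a b c d τ T n : ℂ) (hJ : c * τ + d ≠ 0)
    (hT : T * (c * τ + d) = a * τ + b) (hden : n * T + 1 ≠ 0) :
    (a * τ + b) / ((n * T + 1) * (c * τ + d)) = (1 * T + 0) / (n * T + 1) := by
  rw [one_mul, add_zero, div_eq_div_iff (mul_ne_zero hden hJ) hden]
  linear_combination -(n * T + 1) * hT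

lemma aux_arg2 (a b c d lam mu τ z T Z n l : ℂ) (hJ : c * τ + d ≠ 0)
    (hT : T * (c * τ + d) = a * τ + b) (hZ : Z * (c * τ + d) = z + lam * τ + mu)
    (hden : n * T + 1 ≠ 0) :
    (z + (l * a + lam) * τ + (l * b + mu)) / ((n * T + 1) * (c * τ + d))
      = (Z + l * T + 0) / (n * T + 1) := by
  rw [add_zero, div_eq_div_iff (mul_ne_zero hden hJ) hden]
  linear_combination -(n * T + 1) * hZ - l * (n * T + 1) * hT

lemma aux_pow (J : ℂ) (hJ : J ≠ 0) (s₁ s₂ : ℕ) (w : ℂ) :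
    J ^ (2 * (s₁ : ℤ) + s₂) * (w * (1 / J ^ 2) ^ s₁ * (1 / J) ^ s₂) = w := by
  rw [show (2 * (s₁ : ℤ) + s₂) = ((2 * s₁ + s₂ : ℕ) : ℤ) by push_cast; ring, zpow_natCast]
  rw [show J ^ (2 * s₁ + s₂) * (w * (1 / J ^ 2) ^ s₁ * (1 / J) ^ s₂)
      = (J ^ 2 * (1 / J ^ 2)) ^ s₁ * (J * (1 / J)) ^ s₂ * w by ring,
    mul_one_div_cancel (pow_ne_zero 2 hJ), mul_one_div_cancel hJ]
  simp

end AuxLemmas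

/-- The top coefficient of a singular quasi-Jacobi form of weight `k` and depth at most
`(s₁, s₂)` is a singular Jacobi form of weight `k - 2s₁ - s₂`. -/
theorem top_coefficient_is_singularJacobiForm (k s₁ s₂ : ℕ) (f : ℂ → ℂ → ℂ)
    (F : ℕ → ℕ → ℂ → ℂ → ℂ)
    (hf : IsSingular f)
    (hFsing : ∀ j₁ j₂, j₁ ≤ s₁ → j₂ ≤ s₂ → IsSingular (F j₁ j₂))
    (hdec : ∀ A : JacobiGroup, ∀ τ z : ℂ, 0 < τ.im → z ∉ lat τ →
      jslash (k : ℤ) f A τ z =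
        ∑ j₁ ∈ Finset.range (s₁ + 1), ∑ j₂ ∈ Finset.range (s₂ + 1),
          F j₁ j₂ τ z * Xfun A τ z ^ j₁ * Yfun A τ z ^ j₂) :
    (∀ B : JacobiGroup, ∀ τ z : ℂ, 0 < τ.im → z ∉ lat τ →
      jslash ((k : ℤ) - 2 * s₁ - s₂) (F s₁ s₂) B τ z = F s₁ s₂ τ z) ∧
    IsSingularJacobiForm ((k : ℤ) - 2 * s₁ - s₂) (F s₁ s₂) := by
  have key : ∀ B : JacobiGroup, ∀ τ z : ℂ, 0 < τ.im → z ∉ lat τ →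
      jslash ((k : ℤ) - 2 * s₁ - s₂) (F s₁ s₂) B τ z = F s₁ s₂ τ z := by
    intro B τ z hτ hz
    set aZ := B.1 0 0 with haZ
    set bZ := B.1 0 1 with hbZ
    set cZ := B.1 1 0 with hcZ
    set dZ := B.1 1 1 with hdZ
    have hdet : aZ * dZ - bZ * cZ = 1 := by
      have := B.1.2
      rwa [Matrix.det_fin_two] at this
    set a : ℂ := (aZ : ℂ) with ha
    set b : ℂ := (bZ : ℂ) with hb
    set c : ℂ := (cZ : ℂ) with hc
    set d : ℂ := (dZ : ℂ) with hd
    set l₀ : ℂ := ((B.2.1 : ℤ) : ℂ) with hl₀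
    set m₀ : ℂ := ((B.2.2 : ℤ) : ℂ) with hm₀
    have hdetC : a * d - b * c = 1 := by
      rw [ha, hb, hc, hd]; exact_mod_cast hdet
    set J : ℂ := c * τ + d with hJdef
    have hJ : J ≠ 0 := denom_ne_zero aZ bZ cZ dZ hdet τ hτ
    set τ' : ℂ := (a * τ + b) / J with hτ'def
    have hτ' : 0 < τ'.im := im_transform aZ bZ cZ dZ hdet τ hτ
    set z' : ℂ := (z + l₀ * τ + m₀) / J with hz'def
    have hT : τ' * J = a * τ + b := by
      rw [hτ'def, div_mul_cancel₀ _ hJ]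
    have hZ : z' * J = z + l₀ * τ + m₀ := by
      rw [hz'def, div_mul_cancel₀ _ hJ]
    have hz' : z' ∉ lat τ' := by
      rintro ⟨⟨p, q⟩, hpq⟩
      apply hz
      refine ⟨(p * dZ + q * bZ - B.2.2, p * cZ + q * aZ - B.2.1), ?_⟩
      simp only [latP] at hpq ⊢
      rw [hz'def, hτ'def] at hpq
      field_simp at hpq
      rw [hJdef] at hpq
      push_cast
      linear_combination hpq
    have hdetA : ∀ n : ℤ, (!![1, 0; n, 1] : Matrix (Fin 2) (Fin 2) ℤ).det = 1 := by
      intro n; simp [Matrix.det_fin_two_of]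
    set AA : ℤ → ℤ → JacobiGroup :=
      fun n l => (⟨!![1, 0; n, 1], hdetA n⟩, (l, 0)) with hAA
    set u : ℤ → ℂ := fun n => (n : ℂ) / ((n : ℂ) * τ' + 1) with hu_def
    set v : ℤ → ℤ → ℂ := fun n l => ((n : ℂ) * z' - (l : ℂ)) / ((n : ℂ) * τ' + 1) with hv_def
    have hden : ∀ n : ℤ, (n : ℂ) * τ' + 1 ≠ 0 := by
      intro n h
      rcases eq_or_ne n 0 with h0 | h0
      · rw [h0] at h; simp at h
      · have him := congrArg Complex.im h
        simp only [Complex.add_im, Complex.mul_im, Complex.intCast_im, Complex.intCast_re,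
          Complex.one_im, Complex.zero_im, zero_mul, add_zero, mul_zero] at him
        rcases mul_eq_zero.mp him with h' | h'
        · exact h0 (by exact_mod_cast h')
        · exact absurd h' (ne_of_gt hτ')
    have hu : Function.Injective u := by
      intro n m h
      simp only [hu_def] at h
      rw [div_eq_div_iff (hden n) (hden m)] at h
      have : (n : ℂ) = m := by linear_combination h
      exact_mod_cast this
    have hv : ∀ n, Function.Injective (v n) := by
      intro n l₁ l₂ h
      simp only [hv_def] at h
      rw [div_eq_div_iff (hden n) (hden n)] at h
      have h2 : (n : ℂ) * z' - l₁ = (n : ℂ) * z' - l₂ := mul_right_cancel₀ (hden n) h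
      have : (l₁ : ℂ) = l₂ := by linear_combination -h2
      exact_mod_cast this
    have hmain : ∀ n l : ℤ,
        ∑ j₁ ∈ Finset.range (s₁+1), ∑ j₂ ∈ Finset.range (s₂+1),
            F j₁ j₂ τ z * ((1/J^2) * u n + c / J) ^ j₁
              * ((1/J) * v n l + (c*z + c*m₀ - d*l₀)/J) ^ j₂
          = ∑ j₁ ∈ Finset.range (s₁+1), ∑ j₂ ∈ Finset.range (s₂+1),
              (J ^ (-(k:ℤ)) * F j₁ j₂ τ' z') * u n ^ j₁ * v n l ^ j₂ := by
      intro n l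
      have hja : ja (jmul (AA n l) B) = a := by
        show ((((AA n l).1 * B.1 : Matrix.SpecialLinearGroup (Fin 2) ℤ) 0 0 : ℤ) : ℂ) = _
        rw [Matrix.SpecialLinearGroup.coe_mul]
        simp [ja, jmul, hAA, Matrix.SpecialLinearGroup.coe_mul, Matrix.mul_apply, Fin.sum_univ_two, ← haZ, ← ha]
      have hjb : jb (jmul (AA n l) B) = b := by
        show ((((AA n l).1 * B.1 : Matrix.SpecialLinearGroup (Fin 2) ℤ) 0 1 : ℤ) : ℂ) = _
        rw [Matrix.SpecialLinearGroup.coe_mul]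
        simp [jb, jmul, hAA, Matrix.SpecialLinearGroup.coe_mul, Matrix.mul_apply, Fin.sum_univ_two, ← hbZ, ← hb]
      have hjc : jc (jmul (AA n l) B) = (n:ℂ) * a + c := by
        show ((((AA n l).1 * B.1 : Matrix.SpecialLinearGroup (Fin 2) ℤ) 1 0 : ℤ) : ℂ) = _
        rw [Matrix.SpecialLinearGroup.coe_mul]
        simp [jc, jmul, hAA, Matrix.SpecialLinearGroup.coe_mul, Matrix.mul_apply, Fin.sum_univ_two, ha, haZ, hc, hcZ]
      have hjd : jd (jmul (AA n l) B) = (n:ℂ) * b + d := by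
        show ((((AA n l).1 * B.1 : Matrix.SpecialLinearGroup (Fin 2) ℤ) 1 1 : ℤ) : ℂ) = _
        rw [Matrix.SpecialLinearGroup.coe_mul]
        simp [jd, jmul, hAA, Matrix.SpecialLinearGroup.coe_mul, Matrix.mul_apply, Fin.sum_univ_two, hb, hbZ, hd, hdZ]
      have hjl : jlam (jmul (AA n l) B) = (l:ℂ) * a + l₀ := by
        simp [jlam, jmul, hAA, ha, haZ, hl₀]
      have hjm : jmu (jmul (AA n l) B) = (l:ℂ) * b + m₀ := by
        simp [jmu, jmul, hAA, hb, hbZ, hm₀]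
      have hAja : ja (AA n l) = 1 := by simp [ja, hAA]
      have hAjb : jb (AA n l) = 0 := by simp [jb, hAA]
      have hAjc : jc (AA n l) = (n:ℂ) := by simp [jc, hAA]
      have hAjd : jd (AA n l) = 1 := by simp [jd, hAA]
      have hAjl : jlam (AA n l) = (l:ℂ) := by simp [jlam, hAA]
      have hAjm : jmu (AA n l) = 0 := by simp [jmu, hAA]
      have hD : ((n:ℂ) * a + c) * τ + ((n:ℂ) * b + d) = ((n:ℂ) * τ' + 1) * J :=
        aux_D a b c d τ τ' (n:ℂ) hT
      have hXC : Xfun (jmul (AA n l) B) τ z = (1/J^2) * u n + c / J := by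
        simp only [Xfun, hjc, hjd, hD, hu_def]
        exact aux_X a b c d τ τ' (n:ℂ) hdetC hJ hT (hden n)
      have hYC : Yfun (jmul (AA n l) B) τ z
          = (1/J) * v n l + (c*z + c*m₀ - d*l₀)/J := by
        simp only [Yfun, hjc, hjd, hjl, hjm, hD, hv_def]
        exact aux_Y a b c d l₀ m₀ τ z τ' z' (n:ℂ) (l:ℂ) hdetC hJ hT hZ (hden n)
      have hXA : Xfun (AA n l) τ' z' = u n := by
        simp only [Xfun, hAjc, hAjd, hu_def]
      have hYA : Yfun (AA n l) τ' z' = v n l := by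
        simp only [Yfun, hAjc, hAjd, hAjl, hAjm, hv_def]
        congr 1
        ring
      have hco : jslash (k:ℤ) f (jmul (AA n l) B) τ z
          = J ^ (-(k:ℤ)) * jslash (k:ℤ) f (AA n l) τ' z' := by
        simp only [jslash, hja, hjb, hjc, hjd, hjl, hjm, hAja, hAjb, hAjc, hAjd, hAjl, hAjm]
        rw [hD, mul_zpow]
        rw [aux_arg1 a b c d τ τ' (n:ℂ) hJ hT (hden n)]
        rw [aux_arg2 a b c d l₀ m₀ τ z τ' z' (n:ℂ) (l:ℂ) hJ hT hZ (hden n)]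
        ring
      have h1 := hdec (jmul (AA n l) B) τ z hτ hz
      have h2 := hdec (AA n l) τ' z' hτ' hz'
      rw [hXC, hYC] at h1
      rw [hXA, hYA] at h2
      rw [← h1, hco, h2, Finset.mul_sum]
      refine Finset.sum_congr rfl fun j₁ _ => ?_
      rw [Finset.mul_sum]
      exact Finset.sum_congr rfl fun j₂ _ => by ring
    have ha₁ : (1/J^2 : ℂ) ≠ 0 := one_div_ne_zero (pow_ne_zero 2 hJ)
    have ha₂ : (1/J : ℂ) ≠ 0 := one_div_ne_zero hJ
    have hkey := bivar s₁ s₂ (fun j₁ j₂ => F j₁ j₂ τ z)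
      (fun j₁ j₂ => J ^ (-(k:ℤ)) * F j₁ j₂ τ' z') (1/J^2) (1/J) (c/J)
      ((c*z + c*m₀ - d*l₀)/J) ha₁ ha₂ u hu v hv hmain
    simp only [jslash, ja, jb, jc, jd, jlam, jmu]
    rw [← haZ, ← hbZ, ← hcZ, ← hdZ, ← ha, ← hb, ← hc, ← hd, ← hl₀, ← hm₀,
      ← hJdef, ← hτ'def, ← hz'def]
    have hsplit : J ^ (-((k:ℤ) - 2*s₁ - s₂)) = J ^ (2*(s₁:ℤ) + s₂) * J ^ (-(k:ℤ)) := by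
      rw [← zpow_add₀ hJ]
      congr 1
      ring
    rw [hsplit, mul_assoc, hkey]
    exact aux_pow J hJ s₁ s₂ (F s₁ s₂ τ z)
  exact ⟨key, ⟨hFsing s₁ s₂ le_rfl le_rfl, key⟩⟩

end
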